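/- Let a1, …, a5 > 0, b1 = (a1 + a2)/(1 + a4·a5), b2 = a2/(1 + a4·a5), b3 = a5/(1 + a4·a5), and define g(V) = (2·b3·V − b1)/(1 + a3·V) + b1 − b3·V and H(V) = b1 − b2·(1 + a3·V)·exp(a3·(V + a4·g(V))) − 2·b3·V. Then H is strictly decreasing on the interval (0, ∞); in particular, for every V > 0, H is differentiable at V with H′(V) < 0. -/

import Mathlib

theorem H_strictly_decreasing
    (a1 a2 a3 a4 a5 b1 b2 b3 : ℝ)
    (ha1 : 0 < a1) (ha2 : 0 < a2) (ha3 : 0 < a3) (ha4 : 0 < a4) (ha5 : 0 < a5)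
    (hb1 : b1 = (a1 + a2) / (1 + a4 * a5))
    (hb2 : b2 = a2 / (1 + a4 * a5))
    (hb3 : b3 = a5 / (1 + a4 * a5))
    (g H : ℝ → ℝ)
    (hg : ∀ V, g V = (2 * b3 * V - b1) / (1 + a3 * V) + b1 - b3 * V)
    (hH : ∀ V, H V = b1 - b2 * (1 + a3 * V) * Real.exp (a3 * (V + a4 * g V)) - 2 * b3 * V) :
    StrictAntiOn H (Set.Ioi 0) ∧
    ∀ V : ℝ, 0 < V → DifferentiableAt ℝ H V ∧ deriv H V < 0 := by
  have hden : (0:ℝ) < 1 + a4 * a5 := by positivity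
  have hb1p : 0 < b1 := by rw [hb1]; positivity
  have hb2p : 0 < b2 := by rw [hb2]; positivity
  have hb3p : 0 < b3 := by rw [hb3]; positivity
  have hkey : a4 * b3 < 1 := by
    rw [hb3, ← mul_div_assoc, div_lt_one hden]; linarith
  have hgfun : g = fun V => (2 * b3 * V - b1) / (1 + a3 * V) + b1 - b3 * V := funext hg
  subst hgfun
  have hHfun : H = fun V => b1 - b2 * (1 + a3 * V) *
      Real.exp (a3 * (V + a4 * ((2 * b3 * V - b1) / (1 + a3 * V) + b1 - b3 * V))) - 2 * b3 * V :=
    funext hH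
  subst hHfun
  have main : ∀ V : ℝ, 0 < V → ∃ d : ℝ,
      HasDerivAt (fun V => b1 - b2 * (1 + a3 * V) *
        Real.exp (a3 * (V + a4 * ((2 * b3 * V - b1) / (1 + a3 * V) + b1 - b3 * V))) - 2 * b3 * V)
        d V ∧ d < 0 := by
    intro V hV
    have hE : (0:ℝ) < 1 + a3 * V := by positivity
    have hEne : (1 + a3 * V) ≠ 0 := ne_of_gt hE
    set gd : ℝ := (2 * b3 * (1 + a3 * V) - (2 * b3 * V - b1) * a3) / (1 + a3 * V) ^ 2 - b3
      with hgd_def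
    have h1 : HasDerivAt (fun V : ℝ => 2 * b3 * V - b1) (2 * b3) V := by
      simpa using ((hasDerivAt_id V).const_mul (2 * b3)).sub_const b1
    have h2 : HasDerivAt (fun V : ℝ => 1 + a3 * V) a3 V := by
      simpa using ((hasDerivAt_id V).const_mul a3).const_add 1
    have hdiv := h1.div h2 hEne
    have hgd : HasDerivAt (fun V => (2 * b3 * V - b1) / (1 + a3 * V) + b1 - b3 * V) gd V := by
      simpa [hgd_def, sub_eq_add_neg, Pi.add_def, Pi.neg_def] using
        (hdiv.add_const b1).sub ((hasDerivAt_id V).const_mul b3)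
    have hu : HasDerivAt (fun V => a3 * (V + a4 *
        ((2 * b3 * V - b1) / (1 + a3 * V) + b1 - b3 * V))) (a3 * (1 + a4 * gd)) V := by
      simpa using ((hasDerivAt_id V).add (hgd.const_mul a4)).const_mul a3
    have hexp := hu.exp
    have hP := ((h2.const_mul b2).mul hexp)
    have hD := ((hasDerivAt_const V b1).sub hP).sub ((hasDerivAt_id V).const_mul (2 * b3))
    refine ⟨_, hD, ?_⟩
    -- d = 0 - (b2*a3 * exp u + (b2*(1+a3V)) * (exp u * (a3*(1+a4*gd)))) - 2*b3*1
    have hgdpos : 0 < 1 + a4 * gd := by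
      have hnum : 2 * b3 * (1 + a3 * V) - (2 * b3 * V - b1) * a3 = 2 * b3 + a3 * b1 := by ring
      have : gd = (2 * b3 + a3 * b1) / (1 + a3 * V) ^ 2 - b3 := by rw [hgd_def, hnum]
      rw [this]
      have h3 : 0 < (2 * b3 + a3 * b1) / (1 + a3 * V) ^ 2 := by positivity
      nlinarith
    have hep := Real.exp_pos (a3 * (V + a4 *
        ((2 * b3 * V - b1) / (1 + a3 * V) + b1 - b3 * V)))
    nlinarith [mul_pos (mul_pos hb2p ha3) hep,
      mul_pos (mul_pos (mul_pos hb2p hE) hep) (mul_pos ha3 hgdpos)]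
  constructor
  · apply strictAntiOn_of_deriv_neg (convex_Ioi 0)
    · intro V hV
      obtain ⟨d, hd, _⟩ := main V hV
      exact hd.differentiableAt.continuousAt.continuousWithinAt
    · intro V hV
      rw [interior_Ioi] at hV
      obtain ⟨d, hd, hdneg⟩ := main V hV
      rw [hd.deriv]; exact hdneg
  · intro V hV
    obtain ⟨d, hd, hdneg⟩ := main V hV
    exact ⟨hd.differentiableAt, by rw [hd.deriv]; exact hdneg⟩
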